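/- Let t ≥ 1 and n ≥ 2t+1, and let ν(t) denote the 2-adic valuation of t. The function (0,t)_n is balanced if and only if 2^(ν(t)+1) does not divide n. In particular, (0,t)_n is always balanced when n is odd. -/

import Mathlib

/-- The monomial rotation symmetric quadratic function `(0,t)_n`:
`x ↦ ∑_{j=0}^{n-1} x_j * x_{(j+t) mod n}` over `ZMod 2`. -/
def mrs (n t : ℕ) (x : Fin n → ZMod 2) : ZMod 2 :=
  ∑ j : Fin n, x j * x ⟨(j.val + t) % n, Nat.mod_lt _ j.pos⟩

/-- Hamming weight of a Boolean function in `n` variables. -/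
noncomputable def wtB {n : ℕ} (f : (Fin n → ZMod 2) → ZMod 2) : ℕ :=
  Nat.card {x : Fin n → ZMod 2 // f x = 1}

open Fin.NatCast

namespace MrsAux

def chi (a : ZMod 2) : ℤ := if a = 1 then -1 else 1

lemma chi_add : ∀ a b : ZMod 2, chi (a + b) = chi a * chi b := by decide
lemma chi_add_one : ∀ a : ZMod 2, chi (a + 1) = - chi a := by decide
lemma chi_zero : chi 0 = 1 := by decide
lemma zmod2_add_self (a : ZMod 2) : a + a = 0 := by
  revert a; decide
lemma zmod2_ne_iff {a b : ZMod 2} (h : a ≠ b) : a + b = 1 := by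
  revert a b; decide

variable {n : ℕ}

lemma sum_chi_eq_zero {f : (Fin n → ZMod 2) → ZMod 2} (y : Fin n → ZMod 2)
    (h : ∀ x, f (x + y) = f x + 1) : ∑ x : Fin n → ZMod 2, chi (f x) = 0 := by
  have h1 : ∑ x : Fin n → ZMod 2, chi (f (x + y)) = ∑ x : Fin n → ZMod 2, chi (f x) :=
    Fintype.sum_equiv (Equiv.addRight y) _ _ (fun x => rfl)
  have h2 : ∑ x : Fin n → ZMod 2, chi (f (x + y)) = - ∑ x : Fin n → ZMod 2, chi (f x) := by
    simp_rw [h, chi_add_one, Finset.sum_neg_distrib]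
  omega

section core
variable (t : ℕ) [NeZero n]

lemma mrs_eq (x : Fin n → ZMod 2) :
    mrs n t x = ∑ j : Fin n, x j * x (j + (t : Fin n)) := by
  unfold mrs
  refine Finset.sum_congr rfl (fun j _ => ?_)
  have hj : (⟨(j.val + t) % n, Nat.mod_lt _ j.pos⟩ : Fin n) = j + (t : Fin n) := by
    apply Fin.ext
    simp only [Fin.add_def, Fin.val_natCast]
    conv_rhs => rw [Nat.add_mod, Nat.mod_mod_of_dvd t dvd_rfl, ← Nat.add_mod]
  rw [hj]

/-- the radical condition -/
def cnd (z : Fin n → ZMod 2) : Prop := ∀ j : Fin n, z (j + (t : Fin n)) = z (j - (t : Fin n))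

instance : DecidablePred (cnd (n := n) t) := fun _ => Fintype.decidableForallFintype

lemma expand (x z : Fin n → ZMod 2) :
    mrs n t (x + z) = mrs n t x + mrs n t z +
      ∑ j : Fin n, x j * (z (j + (t : Fin n)) + z (j - (t : Fin n))) := by
  set c := (t : Fin n)
  have hB : ∑ j : Fin n, z j * x (j + c) = ∑ j : Fin n, z (j - c) * x j := by
    refine Fintype.sum_equiv (Equiv.addRight c) _ _ (fun j => ?_)
    simp
  rw [mrs_eq, mrs_eq, mrs_eq]
  have : ∀ j : Fin n, (x + z) j * (x + z) (j + c) =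
      x j * x (j + c) + (x j * z (j + c) + (z j * x (j + c) + z j * z (j + c))) := by
    intro j; simp only [Pi.add_apply]; ring
  rw [Finset.sum_congr rfl (fun j _ => this j)]
  rw [Finset.sum_add_distrib, Finset.sum_add_distrib, Finset.sum_add_distrib, hB]
  have : ∀ j : Fin n, x j * (z (j + c) + z (j - c)) = x j * z (j + c) + z (j - c) * x j := by
    intro j; ring
  rw [Finset.sum_congr rfl (fun j _ => this j), Finset.sum_add_distrib]
  ring

lemma cnd_cross_zero {z : Fin n → ZMod 2} (hz : cnd t z) (x : Fin n → ZMod 2) :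
    ∑ j : Fin n, x j * (z (j + (t : Fin n)) + z (j - (t : Fin n))) = 0 := by
  refine Finset.sum_eq_zero (fun j _ => ?_)
  rw [hz j, zmod2_add_self, mul_zero]

lemma expand_cnd {z : Fin n → ZMod 2} (hz : cnd t z) (x : Fin n → ZMod 2) :
    mrs n t (x + z) = mrs n t x + mrs n t z := by
  rw [expand, cnd_cross_zero t hz, add_zero]

lemma not_cnd_sum {z : Fin n → ZMod 2} (hz : ¬ cnd t z) :
    ∑ x : Fin n → ZMod 2,
      chi (∑ j : Fin n, x j * (z (j + (t : Fin n)) + z (j - (t : Fin n)))) = 0 := by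
  set c := (t : Fin n)
  obtain ⟨j₀, hj₀⟩ := not_forall.mp hz
  set y : Fin n → ZMod 2 := Pi.single j₀ 1 with hy
  refine sum_chi_eq_zero y (fun x => ?_)
  have h1 : ∀ j : Fin n, (x + y) j * (z (j + c) + z (j - c)) =
      x j * (z (j + c) + z (j - c)) + y j * (z (j + c) + z (j - c)) := by
    intro j; simp only [Pi.add_apply]; ring
  rw [Finset.sum_congr rfl (fun j _ => h1 j), Finset.sum_add_distrib]
  congr 1
  rw [Finset.sum_eq_single j₀ (fun b _ hb => by simp [hy, Pi.single_eq_of_ne hb])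
    (fun h => absurd (Finset.mem_univ j₀) h)]
  rw [hy, Pi.single_eq_same, one_mul, zmod2_ne_iff hj₀]

end core

section core2
variable (t : ℕ) [NeZero n]

lemma chi_mul_self : ∀ a : ZMod 2, chi a * chi a = 1 := by decide

lemma sq_eq :
    (∑ x : Fin n → ZMod 2, chi (mrs n t x)) ^ 2
      = 2 ^ n * ∑ z ∈ Finset.univ.filter (cnd (n := n) t), chi (mrs n t z) := by
  set c := (t : Fin n)
  have key : ∀ z : Fin n → ZMod 2,
      ∑ x : Fin n → ZMod 2, chi (∑ j : Fin n, x j * (z (j + c) + z (j - c)))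
        = if cnd t z then (2:ℤ)^n else 0 := by
    intro z
    by_cases hz : cnd t z
    · simp only [hz, if_true]
      have h0 : ∀ x : Fin n → ZMod 2,
          chi (∑ j : Fin n, x j * (z (j + c) + z (j - c))) = 1 := by
        intro x; rw [cnd_cross_zero t hz, chi_zero]
      rw [Finset.sum_congr rfl (fun x _ => h0 x), Finset.sum_const]
      simp [Fintype.card_fun]
    · simp only [hz, if_false]; exact not_cnd_sum t hz
  rw [sq, Finset.sum_mul_sum]
  have step1 : ∀ x : Fin n → ZMod 2,
      ∑ y : Fin n → ZMod 2, chi (mrs n t x) * chi (mrs n t y)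
        = ∑ z : Fin n → ZMod 2,
            chi (mrs n t z) * chi (∑ j : Fin n, x j * (z (j + c) + z (j - c))) := by
    intro x
    refine (Fintype.sum_equiv (Equiv.addLeft x) _ _ (fun z => ?_)).symm
    show chi (mrs n t z) * chi (∑ j : Fin n, x j * (z (j + c) + z (j - c)))
        = chi (mrs n t x) * chi (mrs n t (x + z))
    calc chi (mrs n t z) * chi (∑ j : Fin n, x j * (z (j + c) + z (j - c)))
        = (chi (mrs n t x) * chi (mrs n t x)) *
            (chi (mrs n t z) * chi (∑ j : Fin n, x j * (z (j + c) + z (j - c)))) := by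
          rw [chi_mul_self, one_mul]
      _ = chi (mrs n t x) * chi (mrs n t (x + z)) := by
          rw [expand t x z, chi_add, chi_add]; ring
  rw [Finset.sum_congr rfl (fun x _ => step1 x), Finset.sum_comm]
  have step2 : ∀ z : Fin n → ZMod 2,
      ∑ x : Fin n → ZMod 2,
          chi (mrs n t z) * chi (∑ j : Fin n, x j * (z (j + c) + z (j - c)))
        = chi (mrs n t z) * (if cnd t z then (2:ℤ)^n else 0) := by
    intro z; rw [← Finset.mul_sum, key z]
  rw [Finset.sum_congr rfl (fun z _ => step2 z)]
  simp_rw [mul_ite, mul_zero]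
  rw [← Finset.sum_filter, ← Finset.sum_mul, mul_comm]

lemma balanced_iff_sum_zero (hn1 : 1 ≤ n) :
    wtB (mrs n t) = 2 ^ (n - 1) ↔ (∑ x : Fin n → ZMod 2, chi (mrs n t x)) = 0 := by
  classical
  have hwt : wtB (mrs n t) = (Finset.univ.filter (fun x => mrs n t x = 1)).card := by
    rw [wtB, Nat.card_eq_fintype_card, Fintype.card_subtype]
  have hsum : ∑ x : Fin n → ZMod 2, chi (mrs n t x)
      = ((Finset.univ.filter (fun x => ¬ mrs n t x = 1)).card : ℤ)
        - ((Finset.univ.filter (fun x => mrs n t x = 1)).card : ℤ) := by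
    unfold chi
    rw [Finset.sum_ite, Finset.sum_const, Finset.sum_const]
    push_cast
    ring
  have hcards : (Finset.univ.filter (fun x => mrs n t x = 1)).card
      + (Finset.univ.filter (fun x => ¬ mrs n t x = 1)).card = 2 ^ n := by
    rw [Finset.card_filter_add_card_filter_not, Finset.card_univ]
    simp [Fintype.card_fun]
  have h2 : (2:ℕ) ^ n = 2 * 2 ^ (n - 1) := by
    rw [← pow_succ']
    congr 1
    omega
  rw [hwt, hsum]
  omega

end core2

lemma sum_period {M : Type*} [AddCommMonoid M] {h : ℕ → M} {p : ℕ}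
    (hp : Function.Periodic h p) (k : ℕ) :
    ∑ j ∈ Finset.range (p * k), h j = k • ∑ j ∈ Finset.range p, h j := by
  induction k with
  | zero => simp
  | succ k ih =>
    have hsplit : p * (k + 1) = p * k + p := by ring
    rw [hsplit, Finset.range_eq_Ico,
      ← Finset.sum_Ico_consecutive _ (Nat.zero_le (p * k)) (Nat.le_add_right _ _),
      ← Finset.range_eq_Ico, ih, Finset.sum_Ico_eq_sum_range]
    have hh : ∀ j, h (p * k + j) = h j := by
      intro j
      have h2 := (hp.nat_mul k) j
      rw [Nat.cast_id] at h2
      rwa [show j + k * p = p * k + j by ring] at h2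
    rw [Nat.add_sub_cancel_left, Finset.sum_congr rfl (fun j _ => hh j), succ_nsmul']
    exact add_comm _ _

section main
variable (t : ℕ) [NeZero n]

lemma zmod2_natCast_odd {m : ℕ} (hm : ¬ 2 ∣ m) : (m : ZMod 2) = 1 := by
  have : m % 2 = 1 := Nat.odd_iff.mp (Nat.odd_iff.mpr (by omega))
  rw [← ZMod.natCast_mod, this, Nat.cast_one]

lemma zmod2_natCast_even {m : ℕ} (hm : 2 ∣ m) : (m : ZMod 2) = 0 :=
  (ZMod.natCast_eq_zero_iff m 2).mpr hm

lemma mrs_eq_zero_of_cnd (ht : t ≠ 0) (hA : 2 ^ (padicValNat 2 t) ∣ n)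
    (hA2 : 2 ∣ n / 2 ^ (padicValNat 2 t))
    {z : Fin n → ZMod 2} (hz : cnd t z) : mrs n t z = 0 := by
  set c := (t : Fin n) with hc
  set a := padicValNat 2 t with ha
  set u := t / 2 ^ a with hudef
  set m := n / 2 ^ a with hmdef
  have hut : 2 ^ a * u = t := Nat.mul_div_cancel' pow_padicValNat_dvd
  have hnm : 2 ^ a * m = n := Nat.mul_div_cancel' hA
  have hu_odd : ¬ 2 ∣ u := by
    have h1 := Nat.not_dvd_ordCompl Nat.prime_two ht
    rwa [Nat.factorization_def t Nat.prime_two] at h1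
  -- the periodic function
  set zt : ℕ → ZMod 2 := fun k => z ((k : ℕ) : Fin n) with hzt
  set h : ℕ → ZMod 2 := fun k => zt k * zt (k + t) with hh
  have hcnd2 : ∀ j : Fin n, z (j + c + c) = z j := by
    intro j
    have h1 := hz (j + c)
    rwa [add_sub_cancel_right] at h1
  have hztn : ∀ k, zt (k + n) = zt k := by
    intro k
    show z (((k + n : ℕ) : Fin n)) = z ((k : ℕ) : Fin n)
    rw [Nat.cast_add, Fin.natCast_self, add_zero]
  have hzt2t : ∀ k, zt (k + t + t) = zt k := by
    intro k
    show z (((k + t + t : ℕ) : Fin n)) = z ((k : ℕ) : Fin n)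
    rw [Nat.cast_add, Nat.cast_add, hcnd2 ((k : ℕ) : Fin n)]
  have hht : Function.Periodic h t := by
    intro k
    show zt (k + t) * zt (k + t + t) = zt k * zt (k + t)
    rw [hzt2t k, mul_comm]
  have hhn : Function.Periodic h n := by
    intro k
    show zt (k + n) * zt (k + n + t) = zt k * zt (k + t)
    rw [hztn k, show k + n + t = k + t + n by ring, hztn (k + t)]
  have hQ : mrs n t z = ∑ j ∈ Finset.range n, h j := by
    rw [mrs_eq, ← Fin.sum_univ_eq_sum_range h n]
    refine Finset.sum_congr rfl (fun j _ => ?_)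
    show z j * z (j + c) = zt j.val * zt (j.val + t)
    rw [hzt]
    simp only []
    rw [Fin.cast_val_eq_self, Nat.cast_add, Fin.cast_val_eq_self]
  have e2 : n * u = t * m := by
    rw [← hut, ← hnm]; ring
  have e1 : (u : ZMod 2) * mrs n t z = (m : ZMod 2) * ∑ j ∈ Finset.range t, h j := by
    have q1 := sum_period hhn u
    have q2 := sum_period hht m
    rw [e2] at q1
    rw [q2] at q1
    rw [hQ, ← nsmul_eq_mul, ← nsmul_eq_mul]
    exact q1.symm
  rw [zmod2_natCast_odd hu_odd, one_mul, zmod2_natCast_even hA2, zero_mul] at e1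
  exact e1

lemma exists_witness (hDt : 2 ^ (padicValNat 2 n) ∣ t) :
    ∃ z₀ : Fin n → ZMod 2, cnd t z₀ ∧ mrs n t z₀ = 1 := by
  set b := padicValNat 2 n with hb
  set D := 2 ^ b with hD
  have hn0 : n ≠ 0 := NeZero.ne n
  have hDn : D ∣ n := pow_padicValNat_dvd
  have hD0 : D ≠ 0 := by positivity
  have hodd : ¬ 2 ∣ n / D := by
    have h1 := Nat.not_dvd_ordCompl Nat.prime_two hn0
    rwa [Nat.factorization_def n Nat.prime_two] at h1
  set c := (t : Fin n) with hc
  set z₀ : Fin n → ZMod 2 := fun j => if D ∣ j.val then 1 else 0 with hz₀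
  have hcv : c.val % D = 0 := by
    show ((t : Fin n)).val % D = 0
    rw [Fin.val_natCast, Nat.mod_mod_of_dvd _ hDn]
    exact Nat.mod_eq_zero_of_dvd hDt
  have key : ∀ k : Fin n, (k + c).val % D = k.val % D := by
    intro k
    rw [Fin.add_def]
    show (k.val + c.val) % n % D = k.val % D
    rw [Nat.mod_mod_of_dvd _ hDn, Nat.add_mod, hcv, add_zero, Nat.mod_mod_of_dvd _ dvd_rfl]
  have keydvd : ∀ k : Fin n, (D ∣ (k + c).val ↔ D ∣ k.val) := by
    intro k
    rw [Nat.dvd_iff_mod_eq_zero, Nat.dvd_iff_mod_eq_zero, key k]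
  refine ⟨z₀, ?_, ?_⟩
  · intro j
    show (if D ∣ (j + c).val then (1 : ZMod 2) else 0) = (if D ∣ (j - c).val then 1 else 0)
    have h1 : D ∣ (j + c).val ↔ D ∣ (j - c).val := by
      have h2 := keydvd (j - c)
      rw [sub_add_cancel] at h2
      rw [keydvd j, ← h2]
    simp only [h1]
  · rw [mrs_eq]
    have hterm : ∀ j : Fin n, z₀ j * z₀ (j + c) = if D ∣ j.val then 1 else 0 := by
      intro j
      by_cases hj : D ∣ j.val
      · simp [hz₀, hj, (keydvd j).mpr hj]
      · simp [hz₀, hj]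
    rw [Finset.sum_congr rfl (fun j _ => hterm j), Finset.sum_boole]
    have hcard : (Finset.univ.filter (fun j : Fin n => D ∣ j.val)).card
        = (Finset.range (n / D)).card := by
      refine Finset.card_bij' (fun j _ => j.val / D)
        (fun i hi => ⟨D * i, ?_⟩) ?_ ?_ ?_ ?_
      · have hi' : i < n / D := Finset.mem_range.mp hi
        calc D * i < D * (n / D) := by
              exact (Nat.mul_lt_mul_left (Nat.pos_of_ne_zero hD0)).mpr hi'
          _ = n := Nat.mul_div_cancel' hDn
      · intro j hj
        have hdj : D ∣ j.val := (Finset.mem_filter.mp hj).2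
        refine Finset.mem_range.mpr ?_
        exact Nat.div_lt_div_of_lt_of_dvd hDn j.isLt
      · intro i hi
        refine Finset.mem_filter.mpr ⟨Finset.mem_univ _, ?_⟩
        exact Dvd.intro i rfl
      · intro j hj
        have hdj : D ∣ j.val := (Finset.mem_filter.mp hj).2
        apply Fin.ext
        exact Nat.mul_div_cancel' hdj
      · intro i hi
        show (D * i) / D = i
        exact Nat.mul_div_cancel_left i (Nat.pos_of_ne_zero hD0)
    rw [hcard, Finset.card_range]
    rw [zmod2_natCast_odd hodd]

end main

end MrsAux


/-- `(0,t)_n` is balanced iff `2^(ν(t)+1)` does not divide `n`; in particular it is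
balanced whenever `n` is odd. -/
theorem mrs_balanced_iff (t n : ℕ) (ht : 1 ≤ t) (hn : 2 * t + 1 ≤ n) :
    (wtB (mrs n t) = 2 ^ (n - 1) ↔ ¬ (2 ^ (padicValNat 2 t + 1) ∣ n)) ∧
    (Odd n → wtB (mrs n t) = 2 ^ (n - 1)) := by
  haveI : NeZero n := ⟨by omega⟩
  have hn1 : 1 ≤ n := by omega
  have ht0 : t ≠ 0 := by omega
  set a := padicValNat 2 t with ha
  set S := ∑ x : Fin n → ZMod 2, MrsAux.chi (mrs n t x) with hS
  set Pf := Finset.univ.filter (MrsAux.cnd (n := n) t) with hPf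
  set T := ∑ z ∈ Pf, MrsAux.chi (mrs n t z) with hT
  have hiff := MrsAux.balanced_iff_sum_zero t hn1
  have hsq : S ^ 2 = 2 ^ n * T := MrsAux.sq_eq t
  have main : wtB (mrs n t) = 2 ^ (n - 1) ↔ ¬ (2 ^ (a + 1) ∣ n) := by
    constructor
    · intro hbal hdvd
      have hA : 2 ^ a ∣ n := dvd_trans (pow_dvd_pow 2 (Nat.le_succ a)) hdvd
      have hA2 : 2 ∣ n / 2 ^ a := by
        obtain ⟨m, hm⟩ := hdvd
        refine ⟨m, ?_⟩
        rw [hm, pow_succ, mul_assoc, Nat.mul_div_cancel_left _ (by positivity)]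
      have hz0 : ∀ z ∈ Pf, mrs n t z = 0 := fun z hz =>
        MrsAux.mrs_eq_zero_of_cnd t ht0 hA hA2 (Finset.mem_filter.mp hz).2
      have hTcard : T = (Pf.card : ℤ) := by
        rw [hT, Finset.sum_congr rfl (fun z hz => by rw [hz0 z hz, MrsAux.chi_zero])]
        simp
      have hS0 : S = 0 := hiff.mp hbal
      have hmem : (0 : Fin n → ZMod 2) ∈ Pf :=
        Finset.mem_filter.mpr ⟨Finset.mem_univ _, fun j => rfl⟩
      have hpos : 0 < Pf.card := Finset.card_pos.mpr ⟨0, hmem⟩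
      have hlt : (0 : ℤ) < 2 ^ n * T := by
        rw [hTcard]
        exact mul_pos (by positivity) (Int.natCast_pos.mpr hpos)
      rw [← hsq, hS0] at hlt
      simp at hlt
    · intro hndvd
      have hb_le : padicValNat 2 n ≤ a := by
        by_contra hlt
        exact hndvd (dvd_trans (pow_dvd_pow 2 (by omega)) pow_padicValNat_dvd)
      have hDt : 2 ^ (padicValNat 2 n) ∣ t := dvd_trans (pow_dvd_pow 2 hb_le) pow_padicValNat_dvd
      obtain ⟨z₀, hz₀c, hz₀Q⟩ := MrsAux.exists_witness t hDt
      have hmemiff : ∀ z : Fin n → ZMod 2, z ∈ Pf ↔ z + z₀ ∈ Pf := by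
        intro z
        simp only [hPf, Finset.mem_filter, Finset.mem_univ, true_and]
        constructor
        · intro hz j
          show (z + z₀) (j + (t : Fin n)) = (z + z₀) (j - (t : Fin n))
          simp only [Pi.add_apply, hz j, hz₀c j]
        · intro hz j
          have h3 := hz j
          simp only [Pi.add_apply] at h3
          rw [hz₀c j] at h3
          exact add_right_cancel h3
      have step : ∑ z ∈ Pf, MrsAux.chi (mrs n t (z + z₀)) = T :=
        Finset.sum_equiv (Equiv.addRight z₀) (fun z => by simpa using hmemiff z)
          (fun z _ => rfl)
      have step2 : ∑ z ∈ Pf, MrsAux.chi (mrs n t (z + z₀)) = -T := by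
        rw [hT, ← Finset.sum_neg_distrib]
        refine Finset.sum_congr rfl (fun z _ => ?_)
        rw [MrsAux.expand_cnd t hz₀c z, hz₀Q, MrsAux.chi_add_one]
      have hT0 : T = 0 := by
        rw [step] at step2
        omega
      rw [hT0, mul_zero] at hsq
      exact hiff.mpr (sq_eq_zero_iff.mp hsq)
  refine ⟨main, fun hodd => main.mpr ?_⟩
  intro hdvd
  have h2n : 2 ∣ n := dvd_trans (dvd_pow_self 2 (Nat.succ_ne_zero a)) hdvd
  rw [Nat.odd_iff] at hodd
  omega
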